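/- Let C_1, C_2 > 0 be real numbers and define polynomials P_n(t) by P_0(t) = c_{0,0}, P_1(t) = c_{1,1}t + c_{1,0} (with c_{0,0}, c_{1,0}, c_{1,1} ≥ 0, c_{1,1} > 0), and P_n(t) = C_1·t·P'_{n-1}(t) + C_2·(n-2)·t·P_{n-2}(t) for n ≥ 2. Then every P_n(t) has only real zeros. -/

import Mathlib

open Polynomial

open Finset

set_option maxHeartbeats 1000000

lemma negprod {s : Finset ℕ} {g : ℕ → ℝ} (h : ∀ i ∈ s, g i < 0) :
    0 < (-1:ℝ)^s.card * ∏ i ∈ s, g i := by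
  induction s using Finset.induction with
  | empty => simp
  | @insert a s hx ih =>
    rw [Finset.prod_insert hx, Finset.card_insert_of_notMem hx]
    have h1 : g a < 0 := h a (mem_insert_self _ _)
    have h2 : 0 < (-1:ℝ)^s.card * ∏ i ∈ s, g i := ih (fun i hi => h i (mem_insert_of_mem hi))
    have e : (-1:ℝ)^(s.card+1) * (g a * ∏ i ∈ s, g i)
        = (-g a) * ((-1:ℝ)^s.card * ∏ i ∈ s, g i) := by ring
    rw [e]; exact mul_pos (by linarith) h2

lemma sgn_prod {s : Finset ℕ} {g : ℕ → ℝ} {j : ℕ}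
    (hneg : ∀ i ∈ s, i < j → g i < 0) (hpos : ∀ i ∈ s, j ≤ i → 0 < g i) :
    0 < (-1:ℝ)^((s.filter (· < j)).card) * ∏ i ∈ s, g i := by
  rw [← Finset.prod_filter_mul_prod_filter_not s (· < j)]
  have h1 := negprod (s := s.filter (· < j)) (g := g)
    (fun i hi => hneg i (mem_filter.1 hi).1 (mem_filter.1 hi).2)
  have h2 : 0 < ∏ i ∈ s.filter (fun i => ¬ i < j), g i :=
    Finset.prod_pos (fun i hi => hpos i (mem_filter.1 hi).1 (not_lt.1 (mem_filter.1 hi).2))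
  have e : (-1:ℝ)^((s.filter (· < j)).card) *
      ((∏ i ∈ s.filter (· < j), g i) * ∏ i ∈ s.filter (fun i => ¬ i < j), g i)
      = ((-1:ℝ)^((s.filter (· < j)).card) * ∏ i ∈ s.filter (· < j), g i) *
        ∏ i ∈ s.filter (fun i => ¬ i < j), g i := by ring
  rw [e]; exact mul_pos h1 h2

lemma eval_prodXsub (w : ℕ → ℝ) (n : ℕ) (x : ℝ) :
    eval x (∏ i ∈ range n, (X - C (w i))) = ∏ i ∈ range n, (x - w i) := by
  rw [eval_prod]; simp

lemma chain_anti {z : ℕ → ℝ} {n : ℕ} (h : ∀ j, j + 1 < n → z (j+1) < z j) :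
    ∀ i j, i < j → j < n → z j < z i := by
  intro i j hij hjn
  induction j with
  | zero => omega
  | succ j ih =>
    rcases Nat.lt_or_ge i j with h' | h'
    · exact lt_trans (h j hjn) (ih h' (by omega))
    · have : i = j := by omega
      subst this; exact h i hjn

lemma ivt' {F : Polynomial ℝ} {x y : ℝ} (hxy : x < y) (h : eval x F * eval y F < 0) :
    ∃ z, x < z ∧ z < y ∧ eval z F = 0 := by
  rcases lt_or_ge (eval x F) 0 with hx | hx
  · have hy : 0 < eval y F := by nlinarith
    have := intermediate_value_Ioo (le_of_lt hxy) F.continuousOn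
    have h0 : (0:ℝ) ∈ Set.Ioo (eval x F) (eval y F) := ⟨hx, hy⟩
    obtain ⟨z, hz, hz0⟩ := this h0
    exact ⟨z, hz.1, hz.2, hz0⟩
  · have hx' : 0 < eval x F := by
      rcases hx.lt_or_eq with h1 | h1
      · exact h1
      · exfalso; rw [← h1] at h; simp at h
    have hy : eval y F < 0 := by nlinarith
    have := intermediate_value_Ioo' (le_of_lt hxy) F.continuousOn
    have h0 : (0:ℝ) ∈ Set.Ioo (eval y F) (eval x F) := ⟨hy, hx'⟩
    obtain ⟨z, hz, hz0⟩ := this h0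
    exact ⟨z, hz.1, hz.2, hz0⟩

lemma deriv_eval_root {w : ℕ → ℝ} {m j : ℕ} (hj : j < m) :
    eval (w j) (derivative (∏ i ∈ range m, (X - C (w i))))
      = ∏ i ∈ (range m).erase j, (w j - w i) := by
  have hsplit : ∏ i ∈ range m, (X - C (w i))
      = (X - C (w j)) * ∏ i ∈ (range m).erase j, (X - C (w i)) :=
    (Finset.mul_prod_erase _ _ (mem_range.2 hj)).symm
  rw [hsplit, derivative_mul]
  simp [eval_prod]

lemma neg_one_sq_pow (j : ℕ) : ((-1:ℝ)^j) * ((-1:ℝ)^j) = 1 := by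
  rw [← pow_add]
  exact Even.neg_one_pow ⟨j, rfl⟩

lemma eq_prod_of_roots {F : Polynomial ℝ} {n : ℕ} {z : ℕ → ℝ}
    (hd : F.natDegree = n) (hF : F ≠ 0)
    (hroot : ∀ j < n, eval (z j) F = 0)
    (hanti : ∀ i j, i < j → j < n → z j < z i) :
    F = C F.leadingCoeff * ∏ i ∈ range n, (X - C (z i)) ∧
      F.Splits := by
  classical
  set L : List ℝ := (List.range n).map z with hL
  have hnodupL : L.Nodup := by
    refine List.Nodup.map_on ?_ List.nodup_range
    intro i hi j hj hij
    rw [List.mem_range] at hi hj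
    by_contra hne
    rcases Nat.lt_or_ge i j with h | h
    · exact (ne_of_gt (hanti i j h hj)) hij
    · have h' : j < i := by omega
      exact (ne_of_lt (hanti j i h' hi)) hij
  set M : Multiset ℝ := (L : Multiset ℝ) with hM
  have hnodup : M.Nodup := hnodupL
  have hle : M ≤ F.roots := by
    rw [Multiset.le_iff_count]
    intro a
    by_cases ha : a ∈ M
    · have h1 : M.count a = 1 := Multiset.count_eq_one_of_mem hnodup ha
      have : a ∈ L := ha
      obtain ⟨j, hj, rfl⟩ := List.mem_map.1 this
      rw [List.mem_range] at hj
      have : (1:ℕ) ≤ F.roots.count (z j) := by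
        rw [Polynomial.count_roots]
        exact (Polynomial.rootMultiplicity_pos hF).2 (hroot j hj)
      omega
    · rw [Multiset.count_eq_zero_of_notMem ha]; omega
  have hcardM : Multiset.card M = n := by simp [hM, hL]
  have hcardroots : Multiset.card F.roots ≤ n := hd ▸ F.card_roots'
  have heq : M = F.roots := Multiset.eq_of_le_of_card_le hle (by omega)
  have hsplits : F.Splits := by
    rw [Polynomial.splits_iff_card_roots, ← heq, hcardM, hd]
  refine ⟨?_, hsplits⟩
  have h1 := hsplits.eq_prod_roots
  refine h1.trans ?_
  rw [← heq]
  congr 1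
  rw [hM, hL, Finset.prod_eq_multiset_prod]
  simp [Multiset.map_coe, List.map_map, Finset.range_val, Multiset.range]
  rfl

def Interlace (f g : Polynomial ℝ) : Prop :=
  ∃ (m k : ℕ) (a b : ℝ) (w u : ℕ → ℝ),
    0 < a ∧ 0 < b ∧ (m = k ∨ m = k + 1) ∧
    (∀ i j, i < j → j < m → w j < w i) ∧
    (∀ i, i < m → w i < 0) ∧ (∀ i, i < k → u i < 0) ∧
    (∀ j, j < k → u j < w j) ∧
    (∀ j, j + 1 < m → w (j+1) < u j) ∧
    f = C a * ∏ i ∈ range m, (X - C (w i)) ∧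
    g = C b * ∏ i ∈ range k, (X - C (u i))

lemma Uf_deg (w : ℕ → ℝ) (m : ℕ) : (∏ i ∈ range m, (X - C (w i))).natDegree = m := by
  rw [natDegree_prod _ _ (fun i _ => X_sub_C_ne_zero (w i))]
  simp

lemma Uf_monic (w : ℕ → ℝ) (m : ℕ) : (∏ i ∈ range m, (X - C (w i))).Monic :=
  monic_prod_of_monic _ _ (fun i _ => monic_X_sub_C (w i))

lemma interlace_step {f g : Polynomial ℝ} {c1 β : ℝ} (hc1 : 0 < c1) (hβ : 0 < β)
    (h : Interlace f g) :
    Interlace (C c1 * derivative (X * f) + C β * (X * g)) f := by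
  classical
  obtain ⟨m, k, a, b, w, u, ha, hb, hmk, hwanti, hwneg, huneg, hul, hur, hf, hg⟩ := h
  have hkm : k ≤ m := by omega
  have hmk1 : m ≤ k + 1 := by omega
  set Uf : Polynomial ℝ := ∏ i ∈ range m, (X - C (w i)) with hUf
  set Ug : Polynomial ℝ := ∏ i ∈ range k, (X - C (u i)) with hUg
  set F : Polynomial ℝ := C c1 * derivative (X * f) + C β * (X * g) with hFdef
  have hXf : X * f = C a * (X * Uf) := by rw [hf]; ring
  have hF : F = C (c1*a) * derivative (X * Uf) + C (β*b) * (X * Ug) := by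
    rw [hFdef, hXf, derivative_C_mul, hg, C_mul, C_mul]; ring
  -- evaluation formula
  have heval : ∀ x : ℝ, eval x F =
      c1*a*(∏ i ∈ range m, (x - w i)) + c1*a*x*(eval x (derivative Uf))
        + β*b*x*(∏ i ∈ range k, (x - u i)) := by
    intro x
    have e1 : eval x Uf = ∏ i ∈ range m, (x - w i) := eval_prodXsub w m x
    have e2 : eval x Ug = ∏ i ∈ range k, (x - u i) := eval_prodXsub u k x
    rw [hF, derivative_mul, derivative_X, one_mul]
    simp only [eval_add, eval_mul, eval_C, eval_X]
    rw [e1, e2]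
    ring
  -- sign at 0
  have hsign0 : 0 < eval 0 F := by
    rw [heval 0]
    have h1 : 0 < ∏ i ∈ range m, ((0:ℝ) - w i) :=
      Finset.prod_pos (fun i hi => by
        have := hwneg i (mem_range.1 hi); linarith)
    have : c1*a*(∏ i ∈ range m, ((0:ℝ) - w i)) > 0 := by positivity
    linarith [this]
  -- sign at w j
  have hsignw : ∀ j, j < m → 0 < (-1:ℝ)^(j+1) * eval (w j) F := by
    intro j hj
    have hjk : j ≤ k := by omega
    have h0 : ∏ i ∈ range m, (w j - w i) = 0 :=
      Finset.prod_eq_zero (mem_range.2 hj) (by ring)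
    have hD := deriv_eval_root (w := w) hj
    have hDsgn : 0 < (-1:ℝ)^j * ∏ i ∈ (range m).erase j, (w j - w i) := by
      have hfilter : ((range m).erase j).filter (· < j) = range j := by
        ext i
        simp only [Finset.mem_filter, Finset.mem_erase, Finset.mem_range]
        omega
      have := sgn_prod (s := (range m).erase j) (g := fun i => w j - w i) (j := j)
        (fun i hi hij => by
          have him : i < m := mem_range.1 (Finset.mem_of_mem_erase hi)
          have := hwanti i j hij hj
          linarith)
        (fun i hi hij => by
          have hne : i ≠ j := (Finset.mem_erase.1 hi).1
          have him : i < m := mem_range.1 (Finset.mem_of_mem_erase hi)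
          have : w i < w j := hwanti j i (by omega) him
          linarith)
      rwa [hfilter, card_range] at this
    have hGsgn : 0 < (-1:ℝ)^j * ∏ i ∈ range k, (w j - u i) := by
      have hfilter : (range k).filter (· < j) = range j := by
        ext i
        simp only [Finset.mem_filter, Finset.mem_range]
        omega
      have := sgn_prod (s := range k) (g := fun i => w j - u i) (j := j)
        (fun i hi hij => by
          have hik : i < k := mem_range.1 hi
          have h1 : w j ≤ w (i+1) := by
            rcases Nat.lt_or_ge (i+1) j with h' | h'
            · exact le_of_lt (hwanti (i+1) j h' hj)
            · have h'' : j = i + 1 := by omega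
              rw [h'']
          have h2 : w (i+1) < u i := hur i (by omega)
          linarith)
        (fun i hi hij => by
          have hik : i < k := mem_range.1 hi
          have h1 : u i < w i := hul i hik
          have h2 : w i ≤ w j := by
            rcases eq_or_lt_of_le hij with h' | h'
            · rw [← h']
            · exact le_of_lt (hwanti j i h' (by omega))
          linarith)
      rwa [hfilter, card_range] at this
    rw [heval (w j), h0, hD]
    set D := ∏ i ∈ (range m).erase j, (w j - w i)
    set G := ∏ i ∈ range k, (w j - u i)
    have hwj : w j < 0 := hwneg j hj
    have key : (-1:ℝ)^(j+1) * (c1*a*0 + c1*a*(w j)*D + β*b*(w j)*G)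
        = (-(w j)) * (c1*a*((-1:ℝ)^j*D) + β*b*((-1:ℝ)^j*G)) := by ring
    rw [key]
    have h1 : 0 < c1*a*((-1:ℝ)^j*D) := by
      have := mul_pos (mul_pos hc1 ha) hDsgn; linarith [this]
    have h2 : 0 < β*b*((-1:ℝ)^j*G) := by
      have := mul_pos (mul_pos hβ hb) hGsgn; linarith [this]
    have h3 : 0 < -(w j) := by linarith
    nlinarith
  -- upper evaluation points
  set bu : ℕ → ℝ := fun j => if j = 0 then 0 else w (j-1) with hbu
  have hsignbu : ∀ j, j ≤ m → 0 < (-1:ℝ)^j * eval (bu j) F := by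
    intro j hj
    cases j with
    | zero => simpa [hbu] using hsign0
    | succ i =>
      have : bu (i+1) = w i := by simp [hbu]
      rw [this]
      exact hsignw i (by omega)
  have hbu_neg : ∀ j, j ≤ m → bu j ≤ 0 := by
    intro j hj
    cases j with
    | zero => simp [hbu]
    | succ i =>
      have hb2 : bu (i+1) = w i := by simp [hbu]
      rw [hb2]
      exact le_of_lt (hwneg i (by omega))
  -- degree and leading coefficient of F
  have hUfdeg : Uf.natDegree = m := Uf_deg w m
  have hUgdeg : Ug.natDegree = k := Uf_deg u k
  have hUfmon : Uf.Monic := Uf_monic w m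
  have hUgmon : Ug.Monic := Uf_monic u k
  have hXUfdeg : (X * Uf).natDegree = 1 + m := by
    rw [(monic_X).natDegree_mul hUfmon, natDegree_X, hUfdeg]
  have hXUgdeg : (X * Ug).natDegree = 1 + k := by
    rw [(monic_X).natDegree_mul hUgmon, natDegree_X, hUgdeg]
  have hdegbound : F.natDegree ≤ k + 1 := by
    rw [hF]
    refine le_trans (natDegree_add_le _ _) (max_le ?_ ?_)
    · refine le_trans (natDegree_C_mul_le _ _) (le_trans (natDegree_derivative_le _) ?_)
      rw [hXUfdeg]; omega
    · refine le_trans (natDegree_C_mul_le _ _) ?_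
      rw [hXUgdeg]; omega
  have hcoeff : F.coeff (k+1) = c1*a*((k+2 : ℕ) : ℝ)*(Uf.coeff (k+1)) + β*b := by
    rw [hF]
    rw [coeff_add, coeff_C_mul, coeff_C_mul, coeff_derivative, coeff_X_mul, coeff_X_mul]
    have hug1 : Ug.coeff k = 1 := by
      have := hUgmon.coeff_natDegree
      rwa [hUgdeg] at this
    rw [hug1]
    push_cast
    ring
  have hcoeffpos : 0 < F.coeff (k+1) := by
    rw [hcoeff]
    rcases hmk with h' | h'
    · have : Uf.coeff (k+1) = 0 := coeff_eq_zero_of_natDegree_lt (by omega)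
      rw [this]; simp; positivity
    · have : Uf.coeff (k+1) = 1 := by rw [← h', ← hUfdeg]; exact hUfmon.coeff_natDegree
      rw [this]
      have : (0:ℝ) < ((k+2 : ℕ) : ℝ) := by positivity
      positivity
  have hFdeg : F.natDegree = k + 1 :=
    le_antisymm hdegbound (le_natDegree_of_ne_zero (ne_of_gt hcoeffpos))
  have hFne : F ≠ 0 := fun h0 => by simp [h0] at hcoeffpos
  have hlc : F.leadingCoeff = F.coeff (k+1) := by rw [leadingCoeff, hFdeg]
  have hlcpos : 0 < F.leadingCoeff := hlc ▸ hcoeffpos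
  -- roots of F
  have hroots : ∀ j, ∃ x, j < k + 1 →
      eval x F = 0 ∧ x < bu j ∧ (j < m → w j < x) := by
    intro j
    by_cases hj : j < k + 1
    swap
    · exact ⟨0, fun h' => absurd h' hj⟩
    rcases Nat.lt_or_ge j m with hjm | hjm
    · -- root between w j and bu j
      have hlt : w j < bu j := by
        cases j with
        | zero => simpa [hbu] using hwneg 0 hjm
        | succ i =>
          simp only [hbu, Nat.succ_ne_zero, if_false, Nat.add_sub_cancel]
          exact hwanti i (i+1) (by omega) hjm
      have s1 := hsignw j hjm
      have s2 := hsignbu j (le_of_lt hjm)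
      have hprod : eval (w j) F * eval (bu j) F < 0 := by
        have e2 := neg_one_sq_pow j
        have e4 : (-1:ℝ)^(j+1) = -((-1:ℝ)^j) := by rw [pow_succ]; ring
        have hm := mul_pos s1 s2
        rw [e4] at hm
        have key : (-((-1:ℝ)^j) * eval (w j) F) * ((-1:ℝ)^j * eval (bu j) F)
            = ((-1:ℝ)^j * (-1:ℝ)^j) * (-(eval (w j) F * eval (bu j) F)) := by ring
        rw [key, e2] at hm
        linarith
      obtain ⟨x, hx1, hx2, hx3⟩ := ivt' hlt hprod
      exact ⟨x, fun _ => ⟨hx3, hx2, fun _ => hx1⟩⟩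
    · -- far root: j = m and k = m
      have hjm' : j = m := by omega
      have hkm' : k = m := by omega
      -- G = C ((-1)^(m+1)) * F.comp (-X) tends to atTop
      set e : ℝ := (-1:ℝ)^(m+1) with he
      have he0 : e ≠ 0 := by positivity
      set G : Polynomial ℝ := C e * F.comp (-X) with hG
      have hnegXdeg : natDegree (-X : Polynomial ℝ) = 1 := by simp
      have hGdeg : G.natDegree = m + 1 := by
        rw [hG, natDegree_C_mul he0, natDegree_comp, hnegXdeg, hFdeg, hkm']
        ring
      have hGlc : G.leadingCoeff = F.leadingCoeff := by
        rw [hG, leadingCoeff_mul, leadingCoeff_C,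
          leadingCoeff_comp (by rw [hnegXdeg]; omega)]
        have : leadingCoeff (-X : Polynomial ℝ) = -1 := by simp
        rw [this, hFdeg, hkm', he]
        have := neg_one_sq_pow (m+1)
        nlinarith [this]
      have hGdegpos : 0 < G.degree := natDegree_pos_iff_degree_pos.1 (by omega)
      have htend := Polynomial.tendsto_atTop_of_leadingCoeff_nonneg G hGdegpos
        (by rw [hGlc]; exact le_of_lt hlcpos)
      have hev : ∀ᶠ x : ℝ in Filter.atTop, 0 < eval x G ∧ -(bu j) < x :=
        (htend.eventually (Filter.eventually_gt_atTop 0)).and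
          (Filter.eventually_gt_atTop (-(bu j)))
      obtain ⟨x0, hx0pos, hx0big⟩ := hev.exists
      set z : ℝ := -x0 with hz
      have hzlt : z < bu j := by rw [hz]; linarith
      have hGz : eval x0 G = e * eval z F := by
        rw [hG, eval_mul, eval_C, eval_comp]
        simp [hz]
      have hsz : 0 < e * eval z F := by rw [← hGz]; exact hx0pos
      have sbu := hsignbu j (by omega)
      have hprod : eval z F * eval (bu j) F < 0 := by
        have e3 : (-1:ℝ)^j * (-1:ℝ)^(m+1) = -1 := by
          rw [hjm', pow_succ, ← mul_assoc, neg_one_sq_pow]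
          ring
        have hm := mul_pos hsz sbu
        have key : (e * eval z F) * ((-1:ℝ)^j * eval (bu j) F)
            = ((-1:ℝ)^j * (-1:ℝ)^(m+1)) * (eval z F * eval (bu j) F) := by rw [he]; ring
        rw [key, e3] at hm
        linarith
      obtain ⟨x, hx1, hx2, hx3⟩ := ivt' hzlt hprod
      exact ⟨x, fun _ => ⟨hx3, hx2, fun hc => absurd hc (by omega)⟩⟩
  choose z hzp using hroots
  have hzroot : ∀ j, j < k + 1 → eval (z j) F = 0 := fun j hj => (hzp j hj).1
  have hzbu : ∀ j, j < k + 1 → z j < bu j := fun j hj => (hzp j hj).2.1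
  have hzw : ∀ j, j < m → w j < z j := by
    intro j hj
    exact (hzp j (by omega)).2.2 hj
  have hchain : ∀ j, j + 1 < k + 1 → z (j+1) < z j := by
    intro j hj
    have h1 : z (j+1) < bu (j+1) := hzbu (j+1) hj
    have h2 : bu (j+1) = w j := by simp [hbu]
    have h3 : w j < z j := hzw j (by omega)
    rw [h2] at h1; linarith
  have hzanti : ∀ i j, i < j → j < k + 1 → z j < z i := chain_anti hchain
  have hzneg : ∀ j, j < k + 1 → z j < 0 := by
    intro j hj
    have := hzbu j hj
    have := hbu_neg j (by omega)
    linarith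
  obtain ⟨hFprod, _⟩ := eq_prod_of_roots hFdeg hFne hzroot hzanti
  -- assemble
  refine ⟨k+1, m, F.leadingCoeff, a, z, w, hlcpos, ha, by omega, hzanti, hzneg,
    hwneg, hzw, ?_, hFprod, hf⟩
  intro j hj
  have h1 : z (j+1) < bu (j+1) := hzbu (j+1) hj
  have h2 : bu (j+1) = w j := by simp [hbu]
  rw [h2] at h1; exact h1

lemma splits_interlace_fst {f g : Polynomial ℝ} (h : Interlace f g) :
    (X * f).Splits := by
  obtain ⟨m, k, a, b, w, u, _, _, _, _, _, _, _, _, hf, _⟩ := h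
  rw [hf]
  exact Splits.mul Splits.X
    (Splits.mul (Splits.C _) (Splits.prod (fun i _ => Splits.X_sub_C _)))


/-- Let `C₁, C₂ > 0` and let `P_n` be defined by `P_0 = c₀₀`, `P_1 = c₁₁ t + c₁₀`
(with `c₀₀, c₁₀ ≥ 0` and `c₁₁ > 0`) and
`P_n(t) = C₁ t P'_{n-1}(t) + C₂ (n-2) t P_{n-2}(t)` for n ≥ 2.
Then every `P_n` has only real zeros (every complex root is real). -/
theorem real_rooted_of_recurrence (C1 C2 : ℝ) (hC1 : 0 < C1) (hC2 : 0 < C2)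
    (c00 c10 c11 : ℝ) (h00 : 0 ≤ c00) (h10 : 0 ≤ c10) (h11 : 0 < c11)
    (P : ℕ → Polynomial ℝ)
    (hP0 : P 0 = C c00)
    (hP1 : P 1 = C c11 * X + C c10)
    (hrec : ∀ n, 2 ≤ n →
      P n = C C1 * X * derivative (P (n - 1)) + C (C2 * ((n : ℝ) - 2)) * X * P (n - 2)) :
    ∀ n, ∀ z ∈ ((P n).map (algebraMap ℝ ℂ)).roots, z.im = 0 := by
  have hc2c11 : C2 * c11 ≠ 0 := by positivity
  -- P 2
  have hP2 : P 2 = C (C1 * c11) * X := by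
    have hr := hrec 2 (by omega)
    norm_num at hr
    rw [hP1] at hr
    rw [hr]
    apply Polynomial.funext
    intro x
    simp
    ring
  -- P 3
  set w0 : ℝ := -((C1^2*c11 + C2*c10)/(C2*c11)) with hw0
  have hw0neg : w0 < 0 := by
    rw [hw0]
    have h1 : 0 < C1^2*c11 + C2*c10 := by positivity
    have h2 : 0 < C2*c11 := by positivity
    have := div_pos h1 h2
    linarith
  have hP3 : P 3 = X * (C (C2*c11) * ∏ i ∈ range 1, (X - C (w0))) := by
    have hr := hrec 3 (by omega)
    norm_num at hr
    rw [hP1, hP2] at hr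
    rw [hr]
    apply Polynomial.funext
    intro x
    simp [hw0]
    field_simp
    ring
  -- the induction
  have key : ∀ n : ℕ, ∃ f g : Polynomial ℝ, P (n+3) = X * f ∧ P (n+2) = X * g ∧ Interlace f g := by
    intro n
    induction n with
    | zero =>
      refine ⟨C (C2*c11) * ∏ i ∈ range 1, (X - C (w0)), C (C1*c11) * ∏ i ∈ range 0, (X - C (0:ℝ)),
        hP3, by rw [hP2]; simp [mul_comm], ?_⟩
      refine ⟨1, 0, C2*c11, C1*c11, fun _ => w0, fun _ => 0, by positivity, by positivity,
        Or.inr rfl, ?_, ?_, ?_, ?_, ?_, rfl, rfl⟩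
      · intro i j hij hj; omega
      · intro i hi; exact hw0neg
      · intro i hi; omega
      · intro j hj; omega
      · intro j hj; omega
    | succ n ih =>
      obtain ⟨f, g, h3, h2, hint⟩ := ih
      have hr := hrec (n + 4) (by omega)
      simp only [show n + 4 - 1 = n + 3 from by omega, show n + 4 - 2 = n + 2 from by omega] at hr
      set β : ℝ := C2 * (((n+4 : ℕ) : ℝ) - 2) with hβ
      have hβpos : 0 < β := by
        rw [hβ]
        push_cast
        nlinarith [hC2]
      set F : Polynomial ℝ := C C1 * derivative (X * f) + C β * (X * g) with hFdef
      have hP4 : P (n + 4) = X * F := by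
        rw [hr, h3, h2, hFdef]
        ring
      exact ⟨F, f, hP4, h3, interlace_step hC1 hβpos hint⟩
  -- splits
  have hsplits : ∀ n, (P n).Splits := by
    intro n
    match n with
    | 0 => rw [hP0]; exact Splits.C _
    | 1 =>
      rw [hP1]
      refine Splits.of_natDegree_le_one ?_
      refine le_trans (natDegree_add_le _ _) (max_le ?_ ?_)
      · exact le_trans (natDegree_C_mul_le _ _) (by simp)
      · simp
    | 2 =>
      rw [hP2]
      exact Splits.mul (Splits.C _) Splits.X
    | (n + 3) =>
      obtain ⟨f, g, h3, _, hint⟩ := key n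
      rw [h3]
      exact splits_interlace_fst hint
  intro n z hz
  rw [(hsplits n).roots_map (algebraMap ℝ ℂ)] at hz
  obtain ⟨r, _, rfl⟩ := Multiset.mem_map.1 hz
  simp [Complex.ofReal_im]
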